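/- Assume in addition that V_1^n = Ṽ_1^{n+1} = 1/‖ 1 ‖ and V_{1+s}^n = Ṽ_{1+s}^{n+1} = v_s/‖ v_s ‖ for all s ∈ {1,…,d} (so r ≥ d+1). Define the updated momentum density componentwise by j_s^{n+1} = ‖ v_s ‖ · Σ_k X̃_k^{n+1} S̃^{n+1}_{k,1+s}. Then the discrete momentum continuity equation (j^{n+1} − j^n)/τ + ∇_x · σ^n + E^n ρ^n = 0 holds pointwise on Ω_x (componentwise: (j_s^{n+1} − j_s^n)/τ + Σ_t ∂_{x_t} σ^n_{ts} + E_s^n ρ^n = 0 for each s). -/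

import Mathlib

open MeasureTheory Real Set

noncomputable section

/-- Partial derivative of `u` in the `i`-th coordinate direction. -/
def pd {d : ℕ} (i : Fin d) (u : (Fin d → ℝ) → ℝ) (x : Fin d → ℝ) : ℝ :=
  fderiv ℝ u x (Pi.single i 1)

/-- Gaussian weight `f_{0v}(v) = exp(-|v|²/2)`. -/
def f0v {d : ℕ} (v : Fin d → ℝ) : ℝ := Real.exp (-(∑ i, v i ^ 2) / 2)

/-- Fundamental domain of the `d`-dimensional torus `Ω_x`. -/
def cube (d : ℕ) : Set (Fin d → ℝ) := Set.univ.pi fun _ => Set.Ioc (0 : ℝ) 1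

/-- `L²(Ω_x)` inner product. -/
def ipx {d : ℕ} (u w : (Fin d → ℝ) → ℝ) : ℝ := ∫ x in cube d, u x * w x

/-- Weighted inner product `⟨u,w⟩_v = ∫ f_{0v} u w dv`. -/
def ipv {d : ℕ} (u w : (Fin d → ℝ) → ℝ) : ℝ := ∫ v, f0v v * u v * w v

/-- Weighted norm `‖w‖ = ⟨w,w⟩_v^{1/2}`. -/
def nv {d : ℕ} (w : (Fin d → ℝ) → ℝ) : ℝ := Real.sqrt (ipv w w)

/-- Periodicity with period 1 in each coordinate (functions on the torus). -/
def Per {d : ℕ} (u : (Fin d → ℝ) → ℝ) : Prop := ∀ x i, u (x + Pi.single i 1) = u x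

/-- All (iterated) derivatives have at most polynomial growth. -/
def PolyAll {d : ℕ} (g : (Fin d → ℝ) → ℝ) : Prop :=
  ∀ n : ℕ, ∃ (C : ℝ) (p : ℕ), ∀ v, ‖iteratedFDeriv ℝ n g v‖ ≤ C * (1 + ‖v‖) ^ p


/-! ### pd calculus -/

lemma pd_eq_of {d : ℕ} (t : Fin d) {u : (Fin d → ℝ) → ℝ} {L : (Fin d → ℝ) →L[ℝ] ℝ}
    {x : Fin d → ℝ} (h : HasFDerivAt u L x) : pd t u x = L (Pi.single t 1) := by
  unfold pd; rw [h.fderiv]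

lemma pd_sum {d : ℕ} (t : Fin d) {ι : Type*} (s : Finset ι)
    (F : ι → (Fin d → ℝ) → ℝ) (x : Fin d → ℝ)
    (h : ∀ i ∈ s, DifferentiableAt ℝ (F i) x) :
    pd t (fun y => ∑ i ∈ s, F i y) x = ∑ i ∈ s, pd t (F i) x := by
  unfold pd; rw [fderiv_fun_sum h]; simp

lemma pd_mul {d : ℕ} (t : Fin d) {u w : (Fin d → ℝ) → ℝ} {x : Fin d → ℝ}
    (hu : DifferentiableAt ℝ u x) (hw : DifferentiableAt ℝ w x) :
    pd t (fun y => u y * w y) x = pd t u x * w x + u x * pd t w x := by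
  unfold pd; rw [fderiv_fun_mul hu hw]
  simp only [ContinuousLinearMap.add_apply, ContinuousLinearMap.smul_apply, smul_eq_mul]
  ring

lemma pd_const_mul {d : ℕ} (t : Fin d) (c : ℝ) {u : (Fin d → ℝ) → ℝ} {x : Fin d → ℝ}
    (hu : DifferentiableAt ℝ u x) :
    pd t (fun y => c * u y) x = c * pd t u x := by
  unfold pd; rw [fderiv_const_mul hu]; simp

lemma pd_mul_const {d : ℕ} (t : Fin d) (c : ℝ) {u : (Fin d → ℝ) → ℝ} {x : Fin d → ℝ}
    (hu : DifferentiableAt ℝ u x) :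
    pd t (fun y => u y * c) x = pd t u x * c := by
  simp_rw [mul_comm _ c]; rw [pd_const_mul t c hu]

lemma pd_coord {d : ℕ} (t s : Fin d) (x : Fin d → ℝ) :
    pd t (fun y => y s) x = if s = t then 1 else 0 := by
  have h : HasFDerivAt (fun y : Fin d → ℝ => y s)
      (ContinuousLinearMap.proj (R := ℝ) (φ := fun _ : Fin d => ℝ) s) x :=
    hasFDerivAt_apply s x
  rw [pd_eq_of t h]
  simp [Pi.single_apply]

lemma contDiff_f0v {d : ℕ} : ContDiff ℝ (⊤ : ℕ∞) (f0v (d := d)) := by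
  unfold f0v
  exact Real.contDiff_exp.comp
    (((ContDiff.sum fun i _ => (ContinuousLinearMap.proj (R := ℝ) (φ := fun _ : Fin d => ℝ) i).contDiff.pow 2).neg).div_const 2)

lemma pd_f0v {d : ℕ} (t : Fin d) (v : Fin d → ℝ) :
    pd t (f0v (d := d)) v = -(v t) * f0v v := by
  have hi : ∀ i : Fin d, HasFDerivAt (fun w : Fin d → ℝ => w i ^ 2)
      (((2 : ℝ) * v i) • ContinuousLinearMap.proj (R := ℝ) (φ := fun _ : Fin d => ℝ) i) v := by
    intro i
    have h1 : HasFDerivAt (fun w : Fin d → ℝ => w i)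
        (ContinuousLinearMap.proj (R := ℝ) (φ := fun _ : Fin d => ℝ) i) v :=
      hasFDerivAt_apply i v
    have h2 := h1.fun_mul h1
    have hfun : (fun w : Fin d → ℝ => w i ^ 2) = fun w => w i * w i := by
      funext w; ring
    rw [hfun]
    refine h2.congr_fderiv ?_
    ext w
    simp only [ContinuousLinearMap.smul_apply, ContinuousLinearMap.add_apply,
      ContinuousLinearMap.proj_apply, smul_eq_mul]
    ring
  have hs : HasFDerivAt (fun w : Fin d → ℝ => ∑ i, w i ^ 2)
      (∑ i, ((2 : ℝ) * v i) • ContinuousLinearMap.proj (R := ℝ) (φ := fun _ : Fin d => ℝ) i) v :=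
    HasFDerivAt.fun_sum fun i _ => hi i
  have h : HasFDerivAt (f0v (d := d))
      (f0v v • (((-1 : ℝ)/2) • (∑ i, ((2 : ℝ) * v i) • ContinuousLinearMap.proj (R := ℝ) (φ := fun _ : Fin d => ℝ) i))) v := by
    have h2 : HasFDerivAt (fun w : Fin d → ℝ => -(∑ i, w i ^ 2) / 2)
        (((-1 : ℝ)/2) • (∑ i, ((2 : ℝ) * v i) • ContinuousLinearMap.proj (R := ℝ) (φ := fun _ : Fin d => ℝ) i)) v := by
      have hfun2 : (fun w : Fin d → ℝ => -(∑ i, w i ^ 2) / 2)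
          = fun w => ((-1 : ℝ)/2) • ∑ i, w i ^ 2 := by
        funext w; simp [smul_eq_mul]; ring
      rw [hfun2]
      exact hs.fun_const_smul _
    exact h2.exp
  rw [pd_eq_of t h]
  simp only [ContinuousLinearMap.coe_smul', Pi.smul_apply, ContinuousLinearMap.coe_sum',
    Finset.sum_apply, ContinuousLinearMap.proj_apply, smul_eq_mul, Pi.single_apply]
  rw [Finset.sum_congr rfl (fun i _ => by rw [mul_ite, mul_one, mul_zero] :
    ∀ i ∈ Finset.univ, (2 : ℝ) * v i * (if i = t then (1:ℝ) else 0) = if i = t then 2 * v i else 0)]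
  rw [Finset.sum_ite_eq' Finset.univ t fun i => (2 : ℝ) * v i]
  simp only [Finset.mem_univ, if_true]
  ring

lemma continuous_pd {d : ℕ} (t : Fin d) {u : (Fin d → ℝ) → ℝ} (hu : ContDiff ℝ (⊤ : ℕ∞) u) :
    Continuous (fun x => pd t u x) := by
  have h : Continuous (fderiv ℝ u) := (hu.fderiv_right (m := (⊤ : ℕ∞)) (by simp)).continuous
  exact h.clm_apply continuous_const

/-! ### polynomial bounds -/

def NB {d : ℕ} (g : (Fin d → ℝ) → ℝ) : Prop :=
  ∃ C p, 0 ≤ C ∧ ∀ v : Fin d → ℝ, |g v| ≤ C * (1 + ‖v‖) ^ p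

lemma NB.of_bound {d : ℕ} {g : (Fin d → ℝ) → ℝ} (C : ℝ) (p : ℕ)
    (h : ∀ v, |g v| ≤ C * (1 + ‖v‖) ^ p) : NB g := by
  refine ⟨max C 0, p, le_max_right _ _, fun v => (h v).trans ?_⟩
  have h1 : (0:ℝ) ≤ (1 + ‖v‖) ^ p := by positivity
  exact mul_le_mul_of_nonneg_right (le_max_left _ _) h1

lemma NB.mul {d : ℕ} {g h : (Fin d → ℝ) → ℝ} (hg : NB g) (hh : NB h) :
    NB fun v => g v * h v := by
  obtain ⟨C₁, p₁, hC₁, h₁⟩ := hg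
  obtain ⟨C₂, p₂, hC₂, h₂⟩ := hh
  refine ⟨C₁ * C₂, p₁ + p₂, by positivity, fun v => ?_⟩
  rw [abs_mul, pow_add]
  calc |g v| * |h v| ≤ (C₁ * (1 + ‖v‖) ^ p₁) * (C₂ * (1 + ‖v‖) ^ p₂) := by
        apply mul_le_mul (h₁ v) (h₂ v) (abs_nonneg _) (by positivity)
    _ = C₁ * C₂ * ((1 + ‖v‖) ^ p₁ * (1 + ‖v‖) ^ p₂) := by ring

lemma NB.const {d : ℕ} (c : ℝ) : NB fun _ : Fin d → ℝ => c :=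
  NB.of_bound |c| 0 fun v => by simp

lemma NB.coord {d : ℕ} (s : Fin d) : NB fun v : Fin d → ℝ => v s :=
  NB.of_bound 1 1 fun v => by
    have := norm_le_pi_norm v s
    simp only [Real.norm_eq_abs] at this
    simpa using this.trans (by linarith [norm_nonneg v])

lemma NB.congr {d : ℕ} {g h : (Fin d → ℝ) → ℝ} (hg : NB g) (hgh : ∀ v, h v = g v) : NB h := by
  obtain ⟨C, p, hC, hb⟩ := hg
  exact ⟨C, p, hC, fun v => by rw [hgh v]; exact hb v⟩

lemma NB.add {d : ℕ} {g h : (Fin d → ℝ) → ℝ} (hg : NB g) (hh : NB h) :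
    NB fun v => g v + h v := by
  obtain ⟨C₁, p₁, hC₁, h₁⟩ := hg
  obtain ⟨C₂, p₂, hC₂, h₂⟩ := hh
  refine ⟨C₁ + C₂, p₁ + p₂, by positivity, fun v => ?_⟩
  have hv : (1:ℝ) ≤ 1 + ‖v‖ := by linarith [norm_nonneg v]
  have e₁ : (1 + ‖v‖) ^ p₁ ≤ (1 + ‖v‖) ^ (p₁ + p₂) := pow_le_pow_right₀ hv (by omega)
  have e₂ : (1 + ‖v‖) ^ p₂ ≤ (1 + ‖v‖) ^ (p₁ + p₂) := pow_le_pow_right₀ hv (by omega)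
  calc |g v + h v| ≤ |g v| + |h v| := abs_add_le _ _
    _ ≤ C₁ * (1 + ‖v‖) ^ (p₁ + p₂) + C₂ * (1 + ‖v‖) ^ (p₁ + p₂) := by
        refine add_le_add ((h₁ v).trans ?_) ((h₂ v).trans ?_)
        · exact mul_le_mul_of_nonneg_left e₁ hC₁
        · exact mul_le_mul_of_nonneg_left e₂ hC₂
    _ = (C₁ + C₂) * (1 + ‖v‖) ^ (p₁ + p₂) := by ring

lemma NB.sub {d : ℕ} {g h : (Fin d → ℝ) → ℝ} (hg : NB g) (hh : NB h) :
    NB fun v => g v - h v := by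
  have h1 : NB fun v => -h v := (hh.mul (NB.const (-1))).congr fun v => by ring
  exact (hg.add h1).congr fun v => by ring

lemma NB.of_polyAll {d : ℕ} {g : (Fin d → ℝ) → ℝ} (hg : PolyAll g) : NB g := by
  obtain ⟨C, p, hb⟩ := hg 0
  exact NB.of_bound C p fun v => by
    have := hb v
    rwa [norm_iteratedFDeriv_zero, Real.norm_eq_abs] at this

lemma nb_pd {d : ℕ} {g : (Fin d → ℝ) → ℝ} (hg : PolyAll g) (t : Fin d) :
    NB fun v => pd t g v := by
  obtain ⟨C, p, hb⟩ := hg 1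
  refine NB.of_bound C p fun v => ?_
  have h1 : pd t g v = iteratedFDeriv ℝ 1 g v (fun _ => Pi.single t 1) := by
    rw [iteratedFDeriv_one_apply]; rfl
  have h2 : ‖(Pi.single t (1:ℝ) : Fin d → ℝ)‖ = 1 := by
    have := @Pi.norm_single (Fin d) (fun _ => ℝ) _ _ _ t (1:ℝ)
    simpa using this
  calc |pd t g v| = ‖iteratedFDeriv ℝ 1 g v (fun _ => Pi.single t 1)‖ := by
        rw [h1, Real.norm_eq_abs]
    _ ≤ ‖iteratedFDeriv ℝ 1 g v‖ * ∏ _i : Fin 1, ‖(Pi.single t (1:ℝ) : Fin d → ℝ)‖ :=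
        (iteratedFDeriv ℝ 1 g v).le_opNorm _
    _ ≤ C * (1 + ‖v‖) ^ p := by
        rw [h2]
        simpa using hb v

/-! ### integrability against the Gaussian -/

lemma integrable_abs_pow_exp (p : ℕ) {b : ℝ} (hb : 0 < b) :
    Integrable fun x : ℝ => |x| ^ p * Real.exp (-b * x ^ 2) := by
  have h1 : IntegrableOn (fun x : ℝ => |x| ^ p * Real.exp (-b * x ^ 2)) (Ioi 0) := by
    apply (integrableOn_rpow_mul_exp_neg_mul_sq hb (s := (p : ℝ))
      (lt_of_lt_of_le (by norm_num) (Nat.cast_nonneg p))).congr_fun ?_ measurableSet_Ioi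
    intro x hx
    have h : |x| = x := abs_of_pos (mem_Ioi.mp hx)
    simp only [h, Real.rpow_natCast]
  rw [← integrableOn_univ, ← @Iio_union_Ici _ _ (0 : ℝ), integrableOn_union,
    integrableOn_Ici_iff_integrableOn_Ioi]
  refine ⟨?_, h1⟩
  rw [← (Measure.measurePreserving_neg (volume : Measure ℝ)).integrableOn_comp_preimage
      (Homeomorph.neg ℝ).measurableEmbedding]
  simp only [Function.comp_def, neg_sq, neg_preimage, neg_Iio, neg_neg, neg_zero, abs_neg]
  exact h1

lemma integrable_one_add_abs_pow_exp (p : ℕ) :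
    Integrable fun x : ℝ => (1 + |x|) ^ p * Real.exp (-x ^ 2 / 2) := by
  have hb : (0:ℝ) < 1/2 := by norm_num
  have hint : Integrable fun x : ℝ =>
      (2:ℝ) ^ p * Real.exp (-(1/2) * x ^ 2) + (2:ℝ) ^ p * (|x| ^ p * Real.exp (-(1/2) * x ^ 2)) :=
    ((integrable_exp_neg_mul_sq hb).const_mul _).add ((integrable_abs_pow_exp p hb).const_mul _)
  have hcont : Continuous fun x : ℝ => (1 + |x|) ^ p * Real.exp (-x ^ 2 / 2) := by
    have h1 : Continuous fun x : ℝ => (1 + |x|) ^ p :=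
      (continuous_const.add continuous_abs).pow p
    have h2 : Continuous fun x : ℝ => Real.exp (-x ^ 2 / 2) :=
      Real.continuous_exp.comp (Continuous.div_const (continuous_pow 2).neg 2)
    exact h1.mul h2
  apply hint.mono' hcont.aestronglyMeasurable
  filter_upwards with x
  have hx : (0:ℝ) ≤ |x| := abs_nonneg x
  have he : Real.exp (-x ^ 2 / 2) = Real.exp (-(1/2) * x ^ 2) := by ring_nf
  have hpow : (1 + |x|) ^ p ≤ 2 ^ p * (1 + |x| ^ p) := by
    rcases le_total |x| 1 with h | h
    · calc (1 + |x|) ^ p ≤ 2 ^ p := by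
            apply pow_le_pow_left₀ (by positivity) (by linarith)
        _ ≤ 2 ^ p * (1 + |x| ^ p) := by nlinarith [pow_nonneg hx p, pow_pos (show (0:ℝ) < 2 by norm_num) p]
    · calc (1 + |x|) ^ p ≤ (2 * |x|) ^ p := by
            apply pow_le_pow_left₀ (by positivity) (by linarith)
        _ = 2 ^ p * |x| ^ p := by rw [mul_pow]
        _ ≤ 2 ^ p * (1 + |x| ^ p) := by
            have : (0:ℝ) < 2 ^ p := by positivity
            nlinarith
  rw [Real.norm_eq_abs, abs_of_nonneg (by positivity), he]
  calc (1 + |x|) ^ p * Real.exp (-(1/2) * x ^ 2)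
      ≤ (2 ^ p * (1 + |x| ^ p)) * Real.exp (-(1/2) * x ^ 2) :=
        mul_le_mul_of_nonneg_right hpow (Real.exp_pos _).le
    _ = 2 ^ p * Real.exp (-(1/2) * x ^ 2) + 2 ^ p * (|x| ^ p * Real.exp (-(1/2) * x ^ 2)) := by ring

lemma one_add_norm_le_prod {d : ℕ} (hd : 0 < d) (v : Fin d → ℝ) :
    1 + ‖v‖ ≤ ∏ i, (1 + |v i|) := by
  have hne : (Finset.univ : Finset (Fin d)).Nonempty := by
    have : Nonempty (Fin d) := ⟨⟨0, hd⟩⟩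
    exact Finset.univ_nonempty
  obtain ⟨i₀, -, hi₀⟩ := Finset.exists_mem_eq_sup Finset.univ hne fun i => ‖v i‖₊
  have hnorm : ‖v‖ = |v i₀| := by
    rw [Pi.norm_def, hi₀]; simp [Real.norm_eq_abs]
  rw [hnorm]
  rw [← Finset.mul_prod_erase Finset.univ (fun i => 1 + |v i|) (Finset.mem_univ i₀)]
  have h1 : (1:ℝ) ≤ ∏ i ∈ Finset.univ.erase i₀, (1 + |v i|) := by
    have := Finset.prod_le_prod (s := Finset.univ.erase i₀)
      (f := fun _ => (1:ℝ)) (g := fun i => 1 + |v i|)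
      (fun i _ => by norm_num) (fun i _ => by
        show (1:ℝ) ≤ 1 + |v i|
        linarith [abs_nonneg (v i)])
    simpa using this
  nlinarith [abs_nonneg (v i₀)]

lemma f0v_eq_prod {d : ℕ} (v : Fin d → ℝ) :
    f0v v = ∏ i, Real.exp (-(v i) ^ 2 / 2) := by
  rw [f0v, ← Real.exp_sum]
  congr 1
  rw [← Finset.sum_div, ← Finset.sum_neg_distrib]

lemma integrable_f0v_mul {d : ℕ} (hd : 0 < d) {g : (Fin d → ℝ) → ℝ}
    (hg : Continuous g) (hb : NB g) :
    Integrable fun v : Fin d → ℝ => f0v v * g v := by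
  obtain ⟨C, p, hC, hbd⟩ := hb
  have hdom : Integrable fun v : Fin d → ℝ =>
      C * ∏ i, ((1 + |v i|) ^ p * Real.exp (-(v i) ^ 2 / 2)) :=
    (Integrable.fintype_prod fun _ => integrable_one_add_abs_pow_exp p).const_mul C
  apply hdom.mono'
  · exact ((Real.continuous_exp.comp (by fun_prop)).mul hg).aestronglyMeasurable
  filter_upwards with v
  have h0 : (0:ℝ) < f0v v := Real.exp_pos _
  have h1 : (1 + ‖v‖) ^ p ≤ ∏ i, (1 + |v i|) ^ p := by
    calc (1 + ‖v‖) ^ p ≤ (∏ i, (1 + |v i|)) ^ p :=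
          pow_le_pow_left₀ (by positivity) (one_add_norm_le_prod hd v) p
      _ = ∏ i, (1 + |v i|) ^ p := (Finset.prod_pow _ _ _).symm
  rw [Real.norm_eq_abs, abs_mul, abs_of_pos h0]
  calc f0v v * |g v| ≤ f0v v * (C * (1 + ‖v‖) ^ p) :=
        mul_le_mul_of_nonneg_left (hbd v) h0.le
    _ ≤ f0v v * (C * ∏ i, (1 + |v i|) ^ p) := by
        apply mul_le_mul_of_nonneg_left _ h0.le
        exact mul_le_mul_of_nonneg_left h1 hC
    _ = C * ∏ i, ((1 + |v i|) ^ p * Real.exp (-(v i) ^ 2 / 2)) := by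
        rw [f0v_eq_prod, Finset.prod_mul_distrib]; ring

/-! ### cube integrals -/

lemma integrableOn_cube {d : ℕ} {u : (Fin d → ℝ) → ℝ} (hu : Continuous u) :
    IntegrableOn u (cube d) := by
  have hsub : cube d ⊆ Set.Icc (0 : Fin d → ℝ) 1 := by
    rw [← Set.pi_univ_Icc]
    exact Set.pi_mono fun i _ => Set.Ioc_subset_Icc_self
  exact (hu.continuousOn.integrableOn_compact isCompact_Icc).mono_set hsub

lemma integral_f0v_sum {d : ℕ} (hd : 0 < d) {ι : Type*} [Fintype ι]
    (W : ι → (Fin d → ℝ) → ℝ) (hc : ∀ i, Continuous (W i)) (hb : ∀ i, NB (W i)) :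
    ∫ v, f0v v * ∑ i, W i v = ∑ i, ∫ v, f0v v * W i v := by
  simp_rw [Finset.mul_sum]
  exact integral_finset_sum _ fun i _ => integrable_f0v_mul hd (hc i) (hb i)

/-- Expansion of a member of the span of an orthonormal family. -/
lemma expand_span {d R : ℕ} {Xt : Fin R → (Fin d → ℝ) → ℝ}
    (hXtc : ∀ k, Continuous (Xt k))
    (hXton : ∀ k l, ipx (Xt k) (Xt l) = if k = l then (1:ℝ) else 0)
    {g : (Fin d → ℝ) → ℝ} (hg : g ∈ Submodule.span ℝ (Set.range Xt)) (x : Fin d → ℝ) :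
    (∑ k, ipx (Xt k) g * Xt k x) = g x := by
  obtain ⟨c, hc⟩ := (Submodule.mem_span_range_iff_exists_fun ℝ).1 hg
  have hgx : ∀ y, g y = ∑ m, c m * Xt m y := by
    intro y
    rw [← hc]
    simp [Finset.sum_apply]
  have hipx : ∀ k, ipx (Xt k) g = c k := by
    intro k
    have h1 : ipx (Xt k) g = ∑ m, c m * ipx (Xt k) (Xt m) := by
      unfold ipx
      rw [show (fun y => Xt k y * g y) = fun y => ∑ m, c m * (Xt k y * Xt m y) by
        funext y; rw [hgx y, Finset.mul_sum]; exact Finset.sum_congr rfl fun m _ => by ring]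
      rw [integral_finset_sum]
      · exact Finset.sum_congr rfl fun m _ => by
          rw [← integral_const_mul]
      · exact fun m _ => integrableOn_cube (continuous_const.mul ((hXtc k).mul (hXtc m)))
    rw [h1]
    simp only [hXton]
    rw [Finset.sum_congr rfl fun m _ => by rw [mul_ite, mul_one, mul_zero]]
    simp [Finset.sum_ite_eq]
  rw [Finset.sum_congr rfl fun k _ => by rw [hipx k]]
  exact (hgx x).symm

/-! ### Gaussian integration by parts -/

lemma integral_pd_f0v_mul_eq_zero {d : ℕ} (hd : 0 < d) (t : Fin d)
    {h : (Fin d → ℝ) → ℝ} (hsm : ContDiff ℝ (⊤ : ℕ∞) h)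
    (hb : NB h) (hb' : NB fun v => pd t h v) :
    ∫ v, pd t (fun w => f0v w * h w) v = 0 := by
  have hdiff_f : Differentiable ℝ (f0v (d := d)) :=
    contDiff_f0v.differentiable (by simp)
  have hdiff_h : Differentiable ℝ h := hsm.differentiable (by simp)
  have hdiff_g : Differentiable ℝ fun w => f0v w * h w := hdiff_f.mul hdiff_h
  have hcont_pdh : Continuous fun v => pd t h v := continuous_pd t hsm
  have hcont_h : Continuous h := hsm.continuous
  -- pointwise formula for the derivative of f0v * h
  have hpt : ∀ v, pd t (fun w => f0v w * h w) v
      = f0v v * (pd t h v - v t * h v) := by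
    intro v
    rw [pd_mul t (hdiff_f v) (hdiff_h v), pd_f0v t v]
    ring
  have hint1 : Integrable fun v => f0v v * pd t h v :=
    integrable_f0v_mul hd hcont_pdh hb'
  have hint2 : Integrable fun v => f0v v * (v t * h v) :=
    integrable_f0v_mul hd ((continuous_apply t).mul hcont_h) ((NB.coord t).mul hb)
  have hint_g : Integrable fun w => f0v w * h w :=
    integrable_f0v_mul hd hcont_h hb
  have hint_g' : Integrable fun v => pd t (fun w => f0v w * h w) v := by
    have : (fun v => pd t (fun w => f0v w * h w) v)
        = fun v => f0v v * pd t h v - f0v v * (v t * h v) := by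
      funext v; rw [hpt v]; ring
    rw [this]
    exact hint1.sub hint2
  have key := integral_mul_fderiv_eq_neg_fderiv_mul_of_integrable
    (μ := (volume : Measure (Fin d → ℝ))) (f := fun _ => (1:ℝ))
    (g := fun w => f0v w * h w) (v := Pi.single t 1)
    (by simpa using hint_g') (by simp only [one_mul]; exact hint_g')
    (by simpa using hint_g) (fun x _ => differentiableAt_const 1) (fun x _ => hdiff_g x)
  have h1 : ∀ w : Fin d → ℝ, fderiv ℝ (fun _ : Fin d → ℝ => (1:ℝ)) w (Pi.single t 1) = 0 := by
    intro w; rw [fderiv_fun_const]; simp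
  simp only [h1, one_mul, zero_mul] at key
  rw [show (fun v => pd t (fun w => f0v w * h w) v)
    = fun v => fderiv ℝ (fun w => f0v w * h w) v (Pi.single t 1) from rfl]
  rw [key]
  simp

lemma gauss_ibp {d : ℕ} (hd : 0 < d) (t : Fin d)
    {h : (Fin d → ℝ) → ℝ} (hsm : ContDiff ℝ (⊤ : ℕ∞) h)
    (hb : NB h) (hb' : NB fun v => pd t h v) :
    ∫ v, f0v v * pd t h v = ∫ v, f0v v * (v t * h v) := by
  have hdiff_f : Differentiable ℝ (f0v (d := d)) :=
    contDiff_f0v.differentiable (by simp)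
  have hdiff_h : Differentiable ℝ h := hsm.differentiable (by simp)
  have hpt : ∀ v, pd t (fun w => f0v w * h w) v
      = f0v v * pd t h v - f0v v * (v t * h v) := by
    intro v
    rw [pd_mul t (hdiff_f v) (hdiff_h v), pd_f0v t v]
    ring
  have h0 := integral_pd_f0v_mul_eq_zero hd t hsm hb hb'
  rw [show (fun v => pd t (fun w => f0v w * h w) v)
      = fun v => f0v v * pd t h v - f0v v * (v t * h v) from funext hpt] at h0
  have hint1 : Integrable fun v => f0v v * pd t h v :=
    integrable_f0v_mul hd (continuous_pd t hsm) hb'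
  have hint2 : Integrable fun v => f0v v * (v t * h v) :=
    integrable_f0v_mul hd ((continuous_apply t).mul hsm.continuous) ((NB.coord t).mul hb)
  rw [integral_sub hint1 hint2] at h0
  linarith

/-! ### misc helpers for the main proof -/

lemma contDiff_coord {d : ℕ} (s : Fin d) : ContDiff ℝ (⊤ : ℕ∞) fun v : Fin d → ℝ => v s :=
  contDiff_apply ℝ ℝ s

lemma pd_sum_mul {d r : ℕ} (t : Fin d) (u : Fin r → (Fin d → ℝ) → ℝ) (a : Fin r → Fin r → ℝ)
    (b : Fin r → Fin r → ℝ) (hu : ∀ i, Differentiable ℝ (u i)) (x : Fin d → ℝ) :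
    pd t (fun y => ∑ i, ∑ j, u i y * a i j * b i j) x
      = ∑ i, ∑ j, pd t (u i) x * a i j * b i j := by
  rw [pd_sum t Finset.univ _ x (fun i _ => by
    exact DifferentiableAt.fun_sum fun j _ => (((hu i) x).mul_const (a i j)).mul_const (b i j))]
  refine Finset.sum_congr rfl fun i _ => ?_
  have h1 : (fun y => ∑ j, u i y * a i j * b i j) = fun y => u i y * ∑ j, a i j * b i j := by
    funext y; rw [Finset.mul_sum]; exact Finset.sum_congr rfl fun j _ => by ring
  rw [h1, pd_mul_const t _ ((hu i) x), Finset.mul_sum]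
  exact Finset.sum_congr rfl fun j _ => by ring

/-- with `V_1 = Ṽ_1 = 1/‖1‖` and `V_{1+s} = Ṽ_{1+s} = v_s/‖v_s‖`, the
discrete momentum continuity equation
`(j^{n+1} − j^n)/τ + ∇_x · σ^n + E^n ρ^n = 0` holds pointwise, componentwise. -/
theorem discrete_momentum_continuity
    (d r R R' : ℕ) (hd : 0 < d) (hr : d + 1 ≤ r) (hR' : d + 1 ≤ R')
    (τ : ℝ) (hτ : 0 < τ)
    (S : Fin r → Fin r → ℝ)
    (E : (Fin d → ℝ) → Fin d → ℝ)
    (hEsm : ∀ s, ContDiff ℝ (⊤ : ℕ∞) fun x => E x s)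
    (hEper : ∀ s, Per fun x => E x s)
    (X : Fin r → (Fin d → ℝ) → ℝ)
    (hXsm : ∀ i, ContDiff ℝ (⊤ : ℕ∞) (X i)) (hXper : ∀ i, Per (X i))
    (hXon : ∀ i j, ipx (X i) (X j) = if i = j then (1 : ℝ) else 0)
    (V : Fin r → (Fin d → ℝ) → ℝ)
    (hVsm : ∀ j, ContDiff ℝ (⊤ : ℕ∞) (V j)) (hVpoly : ∀ j, PolyAll (V j))
    (hVon : ∀ i j, ipv (V i) (V j) = if i = j then (1 : ℝ) else 0)
    (Xt : Fin R → (Fin d → ℝ) → ℝ)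
    (hXtsm : ∀ k, ContDiff ℝ (⊤ : ℕ∞) (Xt k)) (hXtper : ∀ k, Per (Xt k))
    (hXton : ∀ k l, ipx (Xt k) (Xt l) = if k = l then (1 : ℝ) else 0)
    (Vt : Fin R' → (Fin d → ℝ) → ℝ)
    (hVtsm : ∀ l, ContDiff ℝ (⊤ : ℕ∞) (Vt l)) (hVtpoly : ∀ l, PolyAll (Vt l))
    (hVton : ∀ k l, ipv (Vt k) (Vt l) = if k = l then (1 : ℝ) else 0)
    -- the low-rank function f^n and the right-hand side RHS[f^n]
    (fn : (Fin d → ℝ) → (Fin d → ℝ) → ℝ)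
    (hfn : fn = fun x v => f0v v * ∑ i, ∑ j, X i x * S i j * V j v)
    (RHS : (Fin d → ℝ) → (Fin d → ℝ) → ℝ)
    (hRHS : RHS = fun x v =>
      -(∑ s, v s * pd s (fun y => fn y v) x) + ∑ s, E x s * pd s (fn x) v)
    -- the K step: K^{n+1}_k = K^n_k + τ ∫ V_k RHS[f^n] dv
    (K1 : Fin r → (Fin d → ℝ) → ℝ)
    (hK1 : K1 = fun k x => (∑ i, X i x * S i k) + τ * ∫ v, V k v * RHS x v)
    -- the augmented bases contain X_i, ∂_t X_i, K_i^{n+1} and V_j respectively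
    (hspanX : ∀ i, X i ∈ Submodule.span ℝ (Set.range Xt))
    (hspanDX : ∀ i t, pd t (X i) ∈ Submodule.span ℝ (Set.range Xt))
    (hspanK : ∀ i, K1 i ∈ Submodule.span ℝ (Set.range Xt))
    (hspanV : ∀ j, V j ∈ Submodule.span ℝ (Set.range Vt))
    -- the projection matrices M, N^T and the updated coefficients S̃^{n+1}
    (M : Fin R → Fin r → ℝ) (hM : M = fun k i => ipx (Xt k) (X i))
    (NT : Fin r → Fin R' → ℝ) (hNT : NT = fun j l => ipv (V j) (Vt l))
    (St : Fin R → Fin R' → ℝ)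
    (hSt : St = fun k l => (∑ i, ∑ j, M k i * S i j * NT j l)
      + τ * ∫ x in cube d, ∫ v, Xt k x * Vt l v * RHS x v)
    -- fixed velocity basis functions: 1/‖1‖ and v_s/‖v_s‖, in both V and Ṽ^{n+1}
    (hV1 : V ⟨0, by omega⟩ = fun _ => 1 / nv fun _ : Fin d → ℝ => (1 : ℝ))
    (hVt1 : Vt ⟨0, by omega⟩ = fun _ => 1 / nv fun _ : Fin d → ℝ => (1 : ℝ))
    (hVs : ∀ s : Fin d, V ⟨s.1 + 1, by have := s.isLt; omega⟩
      = fun v => v s / nv fun v : Fin d → ℝ => v s)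
    (hVts : ∀ s : Fin d, Vt ⟨s.1 + 1, by have := s.isLt; omega⟩
      = fun v => v s / nv fun v : Fin d → ℝ => v s)
    -- the moments ρ^n, j^n, σ^n and the updated momentum density j^{n+1}
    (ρ : (Fin d → ℝ) → ℝ) (jn jn' : (Fin d → ℝ) → Fin d → ℝ)
    (σn : (Fin d → ℝ) → Fin d → Fin d → ℝ)
    (hρ : ρ = fun x => ∫ v, fn x v)
    (hjn : jn = fun x s => ∫ v, v s * fn x v)
    (hσn : σn = fun x t s => ∫ v, v t * v s * fn x v)
    (hjn' : jn' = fun x (s : Fin d) => (nv fun v : Fin d → ℝ => v s) *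
      ∑ k, Xt k x * St k ⟨s.1 + 1, by have := s.isLt; omega⟩) :
    ∀ x, ∀ s : Fin d,
      (jn' x s - jn x s) / τ + (∑ t, pd t (fun y => σn y t s) x) + E x s * ρ x = 0 := by
  intro x₀ s
  -- basic regularity facts
  have hXc : ∀ i, Continuous (X i) := fun i => (hXsm i).continuous
  have hXtc : ∀ k, Continuous (Xt k) := fun k => (hXtsm k).continuous
  have hXd : ∀ i, Differentiable ℝ (X i) := fun i => (hXsm i).differentiable (by simp)
  have hVc : ∀ j, Continuous (V j) := fun j => (hVsm j).continuous
  have hVd : ∀ j, Differentiable ℝ (V j) := fun j => (hVsm j).differentiable (by simp)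
  have hVnb : ∀ j, NB (V j) := fun j => NB.of_polyAll (hVpoly j)
  have hVpdc : ∀ (t : Fin d) (j : Fin r), Continuous fun v => pd t (V j) v :=
    fun t j => continuous_pd t (hVsm j)
  have hVpdnb : ∀ (t : Fin d) (j : Fin r), NB fun v => pd t (V j) v :=
    fun t j => nb_pd (hVpoly j) t
  have hXpdc : ∀ (t : Fin d) (i : Fin r), Continuous fun y => pd t (X i) y :=
    fun t i => continuous_pd t (hXsm i)
  have hEc : ∀ t, Continuous fun y => E y t := fun t => (hEsm t).continuous
  have hf0d : Differentiable ℝ (f0v (d := d)) := contDiff_f0v.differentiable (by simp)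
  -- notation
  set ν : ℝ := nv (fun v : Fin d → ℝ => v s) with hνdef
  have he : s.1 + 1 < r := by omega
  have he' : s.1 + 1 < R' := by omega
  set e : Fin r := ⟨s.1 + 1, he⟩ with hedef
  set e' : Fin R' := ⟨s.1 + 1, he'⟩ with he'def
  have hVe : V e = fun v => v s / ν := hVs s
  have hVte : Vt e' = fun v => v s / ν := hVts s
  have hν : ν ≠ 0 := by
    intro h0
    have h1 := hVon e e
    rw [if_pos rfl] at h1
    have hz : V e = fun _ => (0:ℝ) := by
      rw [hVe]; funext v; rw [h0]; simp
    rw [hz] at h1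
    unfold ipv at h1
    simp at h1
  -- integral constants
  set Qc : Fin d → Fin r → ℝ := fun t j => ∫ v, f0v v * (v t * (v s * V j v)) with hQcdef
  set Ic : Fin r → ℝ := fun j => ∫ v, f0v v * V j v with hIcdef
  set Jc : Fin r → ℝ := fun j => ∫ v, f0v v * (v s * V j v) with hJcdef
  -- orthonormality evaluates Jc
  have hJ : ∀ j, Jc j = ν * (if e = j then 1 else 0) := by
    intro j
    have h1 := hVon e j
    have h2 : ipv (V e) (V j) = ν⁻¹ * Jc j := by
      unfold ipv
      rw [hVe]
      rw [show (fun v => f0v v * (v s / ν) * V j v)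
          = fun v => ν⁻¹ * (f0v v * (v s * V j v)) from by
        funext v; rw [div_eq_mul_inv]; ring]
      rw [integral_const_mul, hJcdef]
    rw [h2] at h1
    rw [← h1]
    field_simp
  -- Gaussian integration by parts
  have hIBP : ∀ (t : Fin d) (j : Fin r),
      ∫ v, f0v v * (v s * pd t (V j) v) = Qc t j - (if s = t then Ic j else 0) := by
    intro t j
    have hsm : ContDiff ℝ (⊤ : ℕ∞) fun v : Fin d → ℝ => v s * V j v :=
      (contDiff_coord s).mul (hVsm j)
    have hb : NB fun v : Fin d → ℝ => v s * V j v := (NB.coord s).mul (hVnb j)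
    have hcd : Differentiable ℝ fun v : Fin d → ℝ => v s :=
      (contDiff_coord s).differentiable (by simp)
    have hpdh : ∀ v, pd t (fun w : Fin d → ℝ => w s * V j w) v
        = (if s = t then 1 else 0) * V j v + v s * pd t (V j) v := by
      intro v
      rw [pd_mul t (hcd v) ((hVd j) v), pd_coord]
    have hb' : NB fun v => pd t (fun w : Fin d → ℝ => w s * V j w) v := by
      apply NB.congr (((NB.const (if s = t then (1:ℝ) else 0)).mul (hVnb j)).add
        ((NB.coord s).mul (hVpdnb t j)))
      intro v; rw [hpdh v]
    have key := gauss_ibp hd t hsm hb hb'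
    have hL : ∫ v, f0v v * pd t (fun w : Fin d → ℝ => w s * V j w) v
        = (if s = t then Ic j else 0) + ∫ v, f0v v * (v s * pd t (V j) v) := by
      rw [show (fun v => f0v v * pd t (fun w : Fin d → ℝ => w s * V j w) v)
          = fun v => (if s = t then (1:ℝ) else 0) * (f0v v * V j v)
            + f0v v * (v s * pd t (V j) v) from
        funext fun v => by rw [hpdh v]; ring]
      rw [integral_add ((integrable_f0v_mul hd (hVc j) (hVnb j)).const_mul _)
        (integrable_f0v_mul hd (g := fun v => v s * pd t (V j) v) ((continuous_apply s).mul (hVpdc t j))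
          ((NB.coord s).mul (hVpdnb t j)))]
      rw [integral_const_mul]
      congr 1
      split_ifs
      · rw [one_mul, hIcdef]
      · rw [zero_mul]
    rw [hL] at key
    rw [show (∫ v, f0v v * (v t * ((fun w : Fin d → ℝ => w s * V j w) v))) = Qc t j from by
      rw [hQcdef]] at key
    linarith
  -- derivative formulas
  have hA : ∀ (t : Fin d) (x' : Fin d → ℝ) (v : Fin d → ℝ), pd t (fun y => fn y v) x'
      = f0v v * ∑ i, ∑ j, pd t (X i) x' * S i j * V j v := by
    intro t x' v
    have h1 : (fun y => fn y v) = fun y => (∑ i, ∑ j, X i y * S i j * V j v) * f0v v := by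
      funext y; rw [hfn]; ring
    rw [h1, pd_mul_const t (f0v v) (DifferentiableAt.fun_sum fun i _ =>
      DifferentiableAt.fun_sum fun j _ => ((hXd i x').mul_const _).mul_const _)]
    rw [pd_sum_mul t X S (fun _ j => V j v) hXd x']
    ring
  have hB : ∀ (t : Fin d) (x' : Fin d → ℝ) (v : Fin d → ℝ), pd t (fn x') v
      = -(v t) * f0v v * (∑ i, ∑ j, X i x' * S i j * V j v)
        + f0v v * (∑ i, ∑ j, X i x' * S i j * pd t (V j) v) := by
    intro t x' v
    have h1 : fn x' = fun w => f0v w * ∑ i, ∑ j, X i x' * S i j * V j w := by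
      funext w; rw [hfn]
    rw [h1, pd_mul t (hf0d v) (DifferentiableAt.fun_sum fun i _ =>
      DifferentiableAt.fun_sum fun j _ => ((hVd j) v).const_mul _), pd_f0v t v]
    have h2 : pd t (fun w => ∑ i, ∑ j, X i x' * S i j * V j w) v
        = ∑ i, ∑ j, X i x' * S i j * pd t (V j) v := by
      rw [pd_sum t Finset.univ _ v (fun i _ => DifferentiableAt.fun_sum fun j _ =>
        ((hVd j) v).const_mul _)]
      refine Finset.sum_congr rfl fun i _ => ?_
      rw [pd_sum t Finset.univ _ v (fun j _ => ((hVd j) v).const_mul _)]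
      refine Finset.sum_congr rfl fun j _ => ?_
      rw [pd_const_mul t _ ((hVd j) v)]
    rw [h2]
  -- the two big spatial expressions
  set PP : (Fin d → ℝ) → ℝ :=
    fun x' => ∑ t, ∑ i, ∑ j, pd t (X i) x' * S i j * Qc t j with hPPdef
  set II : (Fin d → ℝ) → ℝ := fun x' => ∑ i, ∑ j, X i x' * S i j * Ic j with hIIdef
  -- the key integral identity
  have hbig : ∀ x' : Fin d → ℝ, ∫ v, v s * RHS x' v = -(PP x') - E x' s * II x' := by
    intro x'
    set W : Fin d × Fin r × Fin r → (Fin d → ℝ) → ℝ := fun q v =>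
      -(pd q.1 (X q.2.1) x' * S q.2.1 q.2.2) * (v q.1 * (v s * V q.2.2 v))
      + (E x' q.1 * (X q.2.1 x' * S q.2.1 q.2.2))
          * (v s * pd q.1 (V q.2.2) v - v s * (v q.1 * V q.2.2 v)) with hWdef
    have hWc : ∀ q, Continuous (W q) := by
      intro q
      apply Continuous.add
      · exact continuous_const.mul ((continuous_apply q.1).mul
          ((continuous_apply s).mul (hVc q.2.2)))
      · exact continuous_const.mul
          (((continuous_apply s).mul (hVpdc q.1 q.2.2)).sub
            ((continuous_apply s).mul ((continuous_apply q.1).mul (hVc q.2.2))))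
    have hWnb : ∀ q, NB (W q) := by
      intro q
      exact ((NB.const _).mul ((NB.coord q.1).mul ((NB.coord s).mul (hVnb q.2.2)))).add
        ((NB.const _).mul (((NB.coord s).mul (hVpdnb q.1 q.2.2)).sub
          ((NB.coord s).mul ((NB.coord q.1).mul (hVnb q.2.2)))))
    have hpt : ∀ v, v s * RHS x' v = f0v v * ∑ q : Fin d × Fin r × Fin r, W q v := by
      intro v
      have h2 : ∑ q : Fin d × Fin r × Fin r, W q v = ∑ t, ∑ i, ∑ j,
          (-(pd t (X i) x' * S i j) * (v t * (v s * V j v))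
           + (E x' t * (X i x' * S i j))
              * (v s * pd t (V j) v - v s * (v t * V j v))) := by
        rw [Fintype.sum_prod_type]
        exact Finset.sum_congr rfl fun t _ => by rw [Fintype.sum_prod_type]
      rw [h2, hRHS]
      simp only [hA, hB]
      rw [neg_add_eq_sub, ← Finset.sum_sub_distrib, Finset.mul_sum]
      conv_rhs => rw [Finset.mul_sum]
      refine Finset.sum_congr rfl fun t _ => ?_
      simp only [mul_add, add_mul, mul_sub, sub_mul, neg_mul, mul_neg, Finset.mul_sum,
        ← Finset.sum_add_distrib, ← Finset.sum_sub_distrib, ← Finset.sum_neg_distrib]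
      refine Finset.sum_congr rfl fun i _ => Finset.sum_congr rfl fun j _ => by ring
    calc ∫ v, v s * RHS x' v
        = ∑ q : Fin d × Fin r × Fin r, ∫ v, f0v v * W q v := by
          rw [show (fun v : Fin d → ℝ => v s * RHS x' v)
            = fun v => f0v v * ∑ q : Fin d × Fin r × Fin r, W q v from funext hpt]
          exact integral_f0v_sum hd _ hWc hWnb
      _ = ∑ q : Fin d × Fin r × Fin r, (-(pd q.1 (X q.2.1) x' * S q.2.1 q.2.2) * Qc q.1 q.2.2
            - (if s = q.1 then E x' q.1 * (X q.2.1 x' * S q.2.1 q.2.2) * Ic q.2.2 else 0)) := by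
          refine Finset.sum_congr rfl fun q _ => ?_
          obtain ⟨t, i, j⟩ := q
          have h3 : (fun v => f0v v * W (t, i, j) v) = fun v =>
              (-(pd t (X i) x' * S i j)) * (f0v v * (v t * (v s * V j v)))
              + (E x' t * (X i x' * S i j)) * (f0v v * (v s * pd t (V j) v)
                  - f0v v * (v s * (v t * V j v))) := by
            funext v; rw [hWdef]; ring
          have i1 : Integrable fun v : Fin d → ℝ => f0v v * (v t * (v s * V j v)) :=
            integrable_f0v_mul hd ((continuous_apply t).mul ((continuous_apply s).mul (hVc j)))
              ((NB.coord t).mul ((NB.coord s).mul (hVnb j)))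
          have i2 : Integrable fun v : Fin d → ℝ => f0v v * (v s * pd t (V j) v) :=
            integrable_f0v_mul hd ((continuous_apply s).mul (hVpdc t j))
              ((NB.coord s).mul (hVpdnb t j))
          have i3 : Integrable fun v : Fin d → ℝ => f0v v * (v s * (v t * V j v)) :=
            integrable_f0v_mul hd ((continuous_apply s).mul ((continuous_apply t).mul (hVc j)))
              ((NB.coord s).mul ((NB.coord t).mul (hVnb j)))
          have i23 : Integrable fun v : Fin d → ℝ =>
              f0v v * (v s * pd t (V j) v) - f0v v * (v s * (v t * V j v)) := i2.sub i3
          rw [h3, integral_add (i1.const_mul _) (i23.const_mul _),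
            integral_const_mul, integral_const_mul, integral_sub i2 i3]
          rw [show (∫ v, f0v v * (v s * (v t * V j v)))
              = Qc t j from by
            rw [hQcdef]
            congr 1
            funext v; ring]
          rw [show (∫ v, f0v v * (v t * (v s * V j v))) = Qc t j from by rw [hQcdef]]
          rw [hIBP t j]
          split_ifs with hst
          · ring
          · ring
      _ = -(PP x') - E x' s * II x' := by
          rw [Finset.sum_sub_distrib]
          congr 1
          · rw [Fintype.sum_prod_type, hPPdef]
            rw [← Finset.sum_neg_distrib]
            refine Finset.sum_congr rfl fun t _ => ?_
            rw [Fintype.sum_prod_type, ← Finset.sum_neg_distrib]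
            refine Finset.sum_congr rfl fun i _ => ?_
            rw [← Finset.sum_neg_distrib]
            exact Finset.sum_congr rfl fun j _ => by ring
          · rw [Fintype.sum_prod_type]
            rw [show (∑ t, ∑ p : Fin r × Fin r,
                if s = t then E x' t * (X p.1 x' * S p.1 p.2) * Ic p.2 else 0)
              = ∑ t, if s = t then
                  ∑ p : Fin r × Fin r, E x' t * (X p.1 x' * S p.1 p.2) * Ic p.2 else 0 from
              Finset.sum_congr rfl fun t _ => by split_ifs <;> simp]
            rw [Finset.sum_ite_eq]
            simp only [Finset.mem_univ, if_true]
            rw [Fintype.sum_prod_type, hIIdef, Finset.mul_sum]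
            refine Finset.sum_congr rfl fun i _ => ?_
            rw [Finset.mul_sum]
            exact Finset.sum_congr rfl fun j _ => by ring
  -- the v-integral against V e
  set G : (Fin d → ℝ) → ℝ := fun x' => ν⁻¹ * (-(PP x') - E x' s * II x') with hGdef
  have hVeRHS : ∀ x' : Fin d → ℝ, ∫ v, V e v * RHS x' v = G x' := by
    intro x'
    rw [show (fun v => V e v * RHS x' v) = fun v => ν⁻¹ * (v s * RHS x' v) from by
      funext v; rw [hVe]; simp only []; rw [div_eq_mul_inv]; ring]
    rw [integral_const_mul, hbig x', hGdef]
  have hPPc : Continuous PP := by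
    rw [hPPdef]
    refine continuous_finset_sum _ fun t _ => continuous_finset_sum _ fun i _ =>
      continuous_finset_sum _ fun j _ => ((hXpdc t i).mul continuous_const).mul continuous_const
  have hIIc : Continuous II := by
    rw [hIIdef]
    refine continuous_finset_sum _ fun i _ =>
      continuous_finset_sum _ fun j _ => ((hXc i).mul continuous_const).mul continuous_const
  have hGc : Continuous G := by
    rw [hGdef]
    exact continuous_const.mul (hPPc.neg.sub ((hEc s).mul hIIc))
  have hK1e : K1 e = fun x' => (∑ i, X i x' * S i e) + τ * G x' := by
    rw [hK1]
    funext x'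
    simp only []
    rw [hVeRHS x']
  have hK1c : Continuous (K1 e) := by
    rw [hK1e]
    exact (continuous_finset_sum _ fun i _ => (hXc i).mul continuous_const).add
      (continuous_const.mul hGc)
  -- the updated coefficients in column e'
  have hSte : ∀ k, St k e' = ipx (Xt k) (K1 e) := by
    intro k
    rw [hSt]
    simp only []
    have hVtVe : Vt e' = V e := by rw [hVte, hVe]
    have h1 : ∀ j, NT j e' = if j = e then (1:ℝ) else 0 := by
      intro j; rw [hNT]; simp only []
      rw [hVtVe]
      exact hVon j e
    have h2 : ∑ i, ∑ j, M k i * S i j * NT j e' = ∑ i, M k i * S i e := by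
      refine Finset.sum_congr rfl fun i _ => ?_
      simp only [h1, mul_ite, mul_one, mul_zero]
      rw [Finset.sum_ite_eq' Finset.univ e fun j => M k i * S i j]
      simp
    have h3 : ∀ x' : Fin d → ℝ, ∫ v, Xt k x' * Vt e' v * RHS x' v = Xt k x' * G x' := by
      intro x'
      rw [show (fun v => Xt k x' * Vt e' v * RHS x' v)
          = fun v => Xt k x' * (V e v * RHS x' v) from by
        funext v; rw [hVtVe]; ring]
      rw [integral_const_mul, hVeRHS x']
    rw [h2]
    simp only [h3]
    have h4 : ipx (Xt k) (K1 e)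
        = ∫ x in cube d, ((∑ i, Xt k x * X i x * S i e) + τ * (Xt k x * G x)) := by
      unfold ipx
      congr 1
      funext x
      rw [hK1e]
      simp only []
      rw [mul_add, Finset.mul_sum]
      congr 1
      · exact Finset.sum_congr rfl fun i _ => by ring
      · ring
    rw [h4]
    have cA : Continuous fun x => ∑ i, Xt k x * X i x * S i e :=
      continuous_finset_sum _ fun i _ => ((hXtc k).mul (hXc i)).mul continuous_const
    have cB : Continuous fun x => τ * (Xt k x * G x) :=
      continuous_const.mul ((hXtc k).mul hGc)
    rw [integral_add (integrableOn_cube cA) (integrableOn_cube cB)]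
    rw [integral_finset_sum _
      (fun i _ => integrableOn_cube (u := fun x => Xt k x * X i x * S i e) (((hXtc k).mul (hXc i)).mul continuous_const))]
    rw [integral_const_mul]
    congr 1
    refine Finset.sum_congr rfl fun i _ => ?_
    rw [integral_mul_const, hM]
    simp only [ipx]
  -- updated momentum density
  have hjn'x : jn' x₀ s = ν * K1 e x₀ := by
    rw [hjn']
    show ν * (∑ k, Xt k x₀ * St k e') = ν * K1 e x₀
    congr 1
    rw [show (∑ k, Xt k x₀ * St k e') = ∑ k, ipx (Xt k) (K1 e) * Xt k x₀ from
      Finset.sum_congr rfl fun k _ => by rw [hSte k]; ring]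
    exact expand_span hXtc hXton (hspanK e) x₀
  -- old momentum density
  have hjnx : jn x₀ s = ν * ∑ i, X i x₀ * S i e := by
    rw [hjn]
    simp only []
    have h1 : (fun v : Fin d → ℝ => v s * fn x₀ v) = fun v => f0v v *
        ∑ p : Fin r × Fin r, (X p.1 x₀ * S p.1 p.2) * (v s * V p.2 v) := by
      funext v
      rw [hfn]
      simp only [Fintype.sum_prod_type, Finset.mul_sum]
      exact Finset.sum_congr rfl fun i _ => Finset.sum_congr rfl fun j _ => by ring
    rw [h1, integral_f0v_sum hd
      (fun p : Fin r × Fin r => fun v => (X p.1 x₀ * S p.1 p.2) * (v s * V p.2 v))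
      (fun p => continuous_const.mul ((continuous_apply s).mul (hVc p.2)))
      (fun p => (NB.const _).mul ((NB.coord s).mul (hVnb p.2)))]
    have h2 : ∀ p : Fin r × Fin r,
        ∫ v, f0v v * ((X p.1 x₀ * S p.1 p.2) * (v s * V p.2 v))
          = (X p.1 x₀ * S p.1 p.2) * Jc p.2 := by
      intro p
      rw [show (fun v => f0v v * ((X p.1 x₀ * S p.1 p.2) * (v s * V p.2 v)))
          = fun v => (X p.1 x₀ * S p.1 p.2) * (f0v v * (v s * V p.2 v)) from by
        funext v; ring]
      rw [integral_const_mul, hJcdef]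
    simp only [h2, hJ]
    rw [Fintype.sum_prod_type, Finset.mul_sum]
    refine Finset.sum_congr rfl fun i _ => ?_
    simp only [mul_ite, mul_one, mul_zero]
    rw [Finset.sum_ite_eq]
    simp only [Finset.mem_univ, if_true]
    ring
  -- density
  have hρx : ρ x₀ = II x₀ := by
    rw [hρ, hIIdef]
    simp only []
    have h1 : (fun v : Fin d → ℝ => fn x₀ v) = fun v => f0v v *
        ∑ p : Fin r × Fin r, (X p.1 x₀ * S p.1 p.2) * V p.2 v := by
      funext v
      rw [hfn]
      simp only [Fintype.sum_prod_type, Finset.mul_sum]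
    rw [h1, integral_f0v_sum hd
      (fun p : Fin r × Fin r => fun v => (X p.1 x₀ * S p.1 p.2) * V p.2 v)
      (fun p => continuous_const.mul (hVc p.2))
      (fun p => (NB.const _).mul (hVnb p.2))]
    rw [Fintype.sum_prod_type]
    refine Finset.sum_congr rfl fun i _ => Finset.sum_congr rfl fun j _ => ?_
    rw [show (fun v => f0v v * ((X i x₀ * S i j) * V j v))
        = fun v => (X i x₀ * S i j) * (f0v v * V j v) from by funext v; ring]
    rw [integral_const_mul, hIcdef]
  -- stress tensor
  have hσpd : ∀ t : Fin d, pd t (fun y => σn y t s) x₀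
      = ∑ i, ∑ j, pd t (X i) x₀ * S i j * Qc t j := by
    intro t
    have hσfun : (fun y => σn y t s) = fun y => ∑ i, ∑ j, X i y * S i j * Qc t j := by
      funext y
      rw [hσn]
      simp only []
      have h1 : (fun v : Fin d → ℝ => v t * v s * fn y v) = fun v => f0v v *
          ∑ p : Fin r × Fin r, (X p.1 y * S p.1 p.2) * (v t * (v s * V p.2 v)) := by
        funext v
        rw [hfn]
        simp only [Fintype.sum_prod_type, Finset.mul_sum]
        exact Finset.sum_congr rfl fun i _ => Finset.sum_congr rfl fun j _ => by ring
      rw [h1, integral_f0v_sum hd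
        (fun p : Fin r × Fin r => fun v => (X p.1 y * S p.1 p.2) * (v t * (v s * V p.2 v)))
        (fun p => continuous_const.mul ((continuous_apply t).mul
          ((continuous_apply s).mul (hVc p.2))))
        (fun p => (NB.const _).mul ((NB.coord t).mul ((NB.coord s).mul (hVnb p.2))))]
      rw [Fintype.sum_prod_type]
      refine Finset.sum_congr rfl fun i _ => Finset.sum_congr rfl fun j _ => ?_
      rw [show (fun v => f0v v * ((X i y * S i j) * (v t * (v s * V j v))))
          = fun v => (X i y * S i j) * (f0v v * (v t * (v s * V j v))) from by funext v; ring]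
      rw [integral_const_mul, hQcdef]
    rw [hσfun]
    exact pd_sum_mul t X S (fun _ j => Qc t j) hXd x₀
  -- final assembly
  have hsum : ∑ t, pd t (fun y => σn y t s) x₀ = PP x₀ := by
    rw [hPPdef]
    exact Finset.sum_congr rfl fun t _ => hσpd t
  rw [hsum, hjn'x, hjnx, hρx, hK1e]
  simp only []
  rw [hGdef]
  simp only []
  field_simp
  ring
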